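/- Let G be a finite group with a normal subgroup S such that S is a nonabelian simple group, the centralizer of S in G is trivial, and the quotient G/S is solvable. Let k, n ≥ 1 and let a_{i,j} ∈ G for 1 ≤ i ≤ k and 1 ≤ j ≤ n. For each j let B_j = ⟨a_{1,j}, ..., a_{k,j}⟩ and assume S ≤ B_j. Assume further that for all 1 ≤ j < l ≤ n there is no group isomorphism α : B_j → B_l with α(a_{i,j}) = a_{i,l} for all 1 ≤ i ≤ k. For 1 ≤ i ≤ k set h_i = (a_{i,1}, ..., a_{i,n}) ∈ G^n, and let H = ⟨h_1, ..., h_k⟩ ≤ G^n. Then H contains the subgroup M = {f ∈ G^n : f(j) ∈ S for all j}, i.e. M = S × ... × S (n copies) ≤ H. -/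

import Mathlib

open Subgroup

namespace AbertAux

variable {G : Type} [Group G]

lemma dichotomy (S : Subgroup G) [hN : S.Normal]
    (hsimple : IsSimpleGroup S)
    (hcent : Subgroup.centralizer (S : Set G) = ⊥)
    (B N : Subgroup G) (hSB : S ≤ B)
    (hconj : ∀ b ∈ B, ∀ x ∈ N, b * x * b⁻¹ ∈ N) :
    N = ⊥ ∨ S ≤ N := by
  have hnormal : ((N ⊓ S).subgroupOf S).Normal := by
    constructor
    rintro ⟨x, hxS⟩ hx ⟨s, hsS⟩
    simp only [Subgroup.mem_subgroupOf, Subgroup.mem_inf] at hx ⊢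
    exact ⟨hconj s (hSB hsS) x hx.1, hN.conj_mem x hx.2 s⟩
  rcases hsimple.eq_bot_or_eq_top_of_normal ((N ⊓ S).subgroupOf S) hnormal with hbot | htop
  · left
    have hNS : ∀ x, x ∈ N → x ∈ S → x = 1 := by
      intro x hx1 hx2
      have hmem : (⟨x, hx2⟩ : S) ∈ (N ⊓ S).subgroupOf S := by
        simp [Subgroup.mem_subgroupOf, hx1, hx2]
      rw [hbot, Subgroup.mem_bot] at hmem
      exact congrArg Subtype.val hmem
    have hle : N ≤ Subgroup.centralizer (S : Set G) := by
      intro x hx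
      rw [Subgroup.mem_centralizer_iff]
      intro s hs
      have hmem : x * s * x⁻¹ * s⁻¹ ∈ N := by
        have h1 : s * x⁻¹ * s⁻¹ ∈ N := hconj s (hSB hs) x⁻¹ (inv_mem hx)
        have h2 := mul_mem hx h1
        convert h2 using 1
        group
      have hmemS : x * s * x⁻¹ * s⁻¹ ∈ S :=
        mul_mem (hN.conj_mem s hs x) (inv_mem hs)
      have h1 : x * s * x⁻¹ * s⁻¹ = 1 := hNS _ hmem hmemS
      rw [mul_inv_eq_one, mul_inv_eq_iff_eq_mul] at h1
      exact h1.symm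
    rw [hcent] at hle
    exact le_bot_iff.mp hle
  · right
    intro s hs
    have hmem : (⟨s, hs⟩ : S) ∈ (N ⊓ S).subgroupOf S := htop ▸ Subgroup.mem_top _
    rw [Subgroup.mem_subgroupOf] at hmem
    exact hmem.1

lemma pi_isSolvable {η : Type} [Finite η] (Q : Type) [Group Q] [Group.IsSolvable Q] :
    Group.IsSolvable (η → Q) := by
  obtain ⟨m, hm⟩ := Group.IsSolvable.solvable (G := Q)
  refine ⟨⟨m, ?_⟩⟩
  have key : ∀ d, derivedSeries (η → Q) d ≤ Subgroup.pi Set.univ (fun _ => derivedSeries Q d) := by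
    intro d
    induction d with
    | zero =>
      intro x _
      exact (Subgroup.mem_pi _).mpr fun i _ => Subgroup.mem_top _
    | succ d ih =>
      calc derivedSeries (η → Q) (d + 1)
          = ⁅derivedSeries (η → Q) d, derivedSeries (η → Q) d⁆ := rfl
        _ ≤ ⁅Subgroup.pi Set.univ fun _ => derivedSeries Q d,
            Subgroup.pi Set.univ fun _ => derivedSeries Q d⁆ :=
              Subgroup.commutator_mono ih ih
        _ = Subgroup.pi Set.univ (fun _ => derivedSeries Q (d + 1)) :=
              commutator_pi_pi_of_finite _ _
  have h2 := key m
  rw [hm, Subgroup.pi_bot] at h2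
  exact le_bot_iff.mp h2

def suppIn {n : ℕ} (j : Fin n) : Subgroup (Fin n → G) where
  carrier := {f | ∀ l, l ≠ j → f l = 1}
  one_mem' := fun _ _ => rfl
  mul_mem' := by
    intro x y hx hy l hl
    show x l * y l = 1
    rw [hx l hl, hy l hl, one_mul]
  inv_mem' := by
    intro x hx l hl
    show (x l)⁻¹ = 1
    rw [hx l hl, inv_one]

lemma mem_suppIn {n : ℕ} {j : Fin n} {f : Fin n → G} :
    f ∈ (suppIn j : Subgroup (Fin n → G)) ↔ ∀ l, l ≠ j → f l = 1 := Iff.rfl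

def suppPair {n : ℕ} (S : Subgroup G) (t j : Fin n) : Subgroup (Fin n → G) where
  carrier := {f | (∀ l, l ≠ t → l ≠ j → f l = 1) ∧ f t ∈ S}
  one_mem' := ⟨fun _ _ _ => rfl, S.one_mem⟩
  mul_mem' := by
    rintro x y ⟨hx1, hx2⟩ ⟨hy1, hy2⟩
    refine ⟨fun l h1 h2 => ?_, S.mul_mem hx2 hy2⟩
    show x l * y l = 1
    rw [hx1 l h1 h2, hy1 l h1 h2, one_mul]
  inv_mem' := by
    rintro x ⟨hx1, hx2⟩
    refine ⟨fun l h1 h2 => ?_, S.inv_mem hx2⟩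
    show (x l)⁻¹ = 1
    rw [hx1 l h1 h2, inv_one]

lemma mem_suppPair {n : ℕ} {S : Subgroup G} {t j : Fin n} {f : Fin n → G} :
    f ∈ (suppPair S t j : Subgroup (Fin n → G)) ↔
      (∀ l, l ≠ t → l ≠ j → f l = 1) ∧ f t ∈ S := Iff.rfl

lemma solvable_of_mulEquiv {A B : Type*} [Group A] [Group B] [Group.IsSolvable A] (e : A ≃* B) :
    Group.IsSolvable B :=
  solvable_of_surjective (f := e.toMonoidHom) e.surjective

theorem abert_aux (S : Subgroup G) [hN : S.Normal]
    (hsimple : IsSimpleGroup S)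
    (hnonab : ∃ x y : S, x * y ≠ y * x)
    (hcent : Subgroup.centralizer (S : Set G) = ⊥)
    (hsolv : Group.IsSolvable (G ⧸ S)) :
    ∀ (n k : ℕ) (a : Fin k → Fin n → G),
      (∀ j : Fin n, S ≤ Subgroup.closure (Set.range fun i => a i j)) →
      (∀ j l : Fin n, j < l →
        ¬ ∃ α : (Subgroup.closure (Set.range fun i => a i j)) ≃*
                (Subgroup.closure (Set.range fun i => a i l)),
          ∀ i : Fin k,
            (α ⟨a i j, Subgroup.subset_closure (Set.mem_range_self i)⟩ : G) = a i l) →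
      Subgroup.pi Set.univ (fun _ => S) ≤ Subgroup.closure (Set.range a) := by
  intro n
  induction n using Nat.strong_induction_on with
  | _ n IH =>
  match n with
  | 0 =>
    intro k a _ _ f _
    have hf1 : f = 1 := funext fun l => l.elim0
    rw [hf1]; exact one_mem _
  | Nat.succ nm =>
    intro k a hB hindep
    classical
    set H : Subgroup (Fin (nm + 1) → G) := Subgroup.closure (Set.range a) with hH
    have hBj : ∀ j, Subgroup.map (Pi.evalMonoidHom (fun _ : Fin (nm + 1) => G) j) H
        = Subgroup.closure (Set.range fun i => a i j) := by
      intro j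
      rw [hH, MonoidHom.map_closure]
      congr 1
      rw [← Set.range_comp]
      rfl
    have hSBj : ∀ j, S ≤ Subgroup.map (Pi.evalMonoidHom (fun _ : Fin (nm + 1) => G) j) H := by
      intro j; rw [hBj j]; exact hB j
    have key : ∀ (j : Fin (nm + 1)) (s : G), s ∈ S → Pi.mulSingle j s ∈ H := by
      intro j
      suffices hS : S ≤ Subgroup.map (Pi.evalMonoidHom (fun _ : Fin (nm + 1) => G) j)
          (H ⊓ suppIn j) by
        intro s hs
        obtain ⟨f, hf, hfj⟩ := hS hs
        rw [SetLike.mem_coe, Subgroup.mem_inf] at hf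
        have hfs : f = Pi.mulSingle j s := by
          funext l
          by_cases hl : l = j
          · subst hl
            rw [Pi.mulSingle_eq_same]
            exact hfj
          · rw [(mem_suppIn.mp hf.2) l hl, Pi.mulSingle_eq_of_ne hl]
        rw [← hfs]
        exact hf.1
      -- dichotomy for N_j
      have hconjN : ∀ b ∈ Subgroup.map (Pi.evalMonoidHom (fun _ : Fin (nm + 1) => G) j) H,
          ∀ x ∈ Subgroup.map (Pi.evalMonoidHom (fun _ : Fin (nm + 1) => G) j) (H ⊓ suppIn j),
          b * x * b⁻¹ ∈
            Subgroup.map (Pi.evalMonoidHom (fun _ : Fin (nm + 1) => G) j) (H ⊓ suppIn j) := by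
        rintro b ⟨f, hf, rfl⟩ x ⟨g, hg, rfl⟩
        rw [SetLike.mem_coe, Subgroup.mem_inf] at hg
        refine ⟨f * g * f⁻¹, Subgroup.mem_inf.mpr ⟨mul_mem (mul_mem hf hg.1) (inv_mem hf),
          mem_suppIn.mpr fun l hl => ?_⟩, rfl⟩
        show f l * g l * (f l)⁻¹ = 1
        rw [(mem_suppIn.mp hg.2) l hl]
        group
      rcases dichotomy S hsimple hcent _ _ (hSBj j) hconjN with hbot | hle
      · -- the hard case
        exfalso
        have Dtriv : ∀ f ∈ H, (∀ l, l ≠ j → f l = 1) → f = 1 := by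
          intro f hf hsupp
          have hfj : f j ∈ (⊥ : Subgroup G) := by
            rw [← hbot]
            exact ⟨f, Subgroup.mem_inf.mpr ⟨hf, mem_suppIn.mpr hsupp⟩, rfl⟩
          rw [Subgroup.mem_bot] at hfj
          funext l
          by_cases hl : l = j
          · subst hl; exact hfj
          · exact hsupp l hl
        -- the induction hypothesis, applied to the system with coordinate j deleted
        have hIH : Subgroup.pi Set.univ (fun _ : Fin nm => S) ≤
            Subgroup.closure (Set.range fun i => (fun q => a i (j.succAbove q))) := by
          apply IH nm (Nat.lt_succ_self nm) k (fun i q => a i (j.succAbove q))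
          · intro q
            exact hB (j.succAbove q)
          · intro q l hql hex
            exact hindep (j.succAbove q) (j.succAbove l) (Fin.strictMono_succAbove j hql) hex
        set rho : (Fin (nm + 1) → G) →* (Fin nm → G) :=
          { toFun := fun f q => f (j.succAbove q)
            map_one' := rfl
            map_mul' := fun _ _ => rfl } with hrho
        have hmaprho : Subgroup.map rho H
            = Subgroup.closure (Set.range fun i => (fun q => a i (j.succAbove q))) := by
          rw [hH, MonoidHom.map_closure]
          congr 1
          rw [← Set.range_comp]
          rfl
        have lift : ∀ g : Fin nm → G, (∀ q, g q ∈ S) → ∃ h ∈ H,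
            ∀ q, h (j.succAbove q) = g q := by
          intro g hg
          have hmem : g ∈ Subgroup.map rho H := by
            rw [hmaprho]
            exact hIH ((Subgroup.mem_pi _).mpr fun q _ => hg q)
          obtain ⟨h, hh, hrh⟩ := hmem
          exact ⟨h, hh, fun q => congrFun hrh q⟩
        by_cases hC : ∀ t : Fin (nm + 1), t ≠ j →
            Subgroup.map (Pi.evalMonoidHom (fun _ : Fin (nm + 1) => G) j)
              (H ⊓ suppPair S t j) = ⊥
        · -- Case A: every C_t is trivial; then B_j is solvable, contradiction
          have Rtriv : ∀ h ∈ H, (∀ l, l ≠ j → h l ∈ S) → h j = 1 := by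
            intro h hh hmem
            have hw : ∀ q : Fin nm,
                Pi.mulSingle (j.succAbove q) (h (j.succAbove q)) ∈ H := by
              intro q
              have hcoords : ∀ q', (Pi.mulSingle q (h (j.succAbove q)) : Fin nm → G) q' ∈ S := by
                intro q'
                rcases eq_or_ne q' q with rfl | hne
                · rw [Pi.mulSingle_eq_same]
                  exact hmem _ (Fin.succAbove_ne j q')
                · rw [Pi.mulSingle_eq_of_ne hne]
                  exact S.one_mem
              obtain ⟨w, hwH, hwq⟩ := lift (Pi.mulSingle q (h (j.succAbove q))) hcoords
              have hwj : w j = 1 := by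
                have hwjmem : w j ∈ (⊥ : Subgroup G) := by
                  rw [← hC (j.succAbove q) (Fin.succAbove_ne j q)]
                  refine ⟨w, Subgroup.mem_inf.mpr ⟨hwH, mem_suppPair.mpr ⟨?_, ?_⟩⟩, rfl⟩
                  · intro l hlt hlj
                    obtain ⟨q', rfl⟩ := Fin.exists_succAbove_eq hlj
                    have hq' : q' ≠ q := by
                      intro hqq
                      exact hlt (by rw [hqq])
                    rw [hwq q']
                    exact Pi.mulSingle_eq_of_ne hq' _
                  · rw [hwq q, Pi.mulSingle_eq_same]
                    exact hmem _ (Fin.succAbove_ne j q)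
                rwa [Subgroup.mem_bot] at hwjmem
              have hwe : w = Pi.mulSingle (j.succAbove q) (h (j.succAbove q)) := by
                funext l
                by_cases hlj : l = j
                · rw [hlj, hwj, Pi.mulSingle_eq_of_ne (Fin.ne_succAbove j q)]
                · obtain ⟨q', rfl⟩ := Fin.exists_succAbove_eq hlj
                  rw [hwq q']
                  rcases eq_or_ne q' q with rfl | hne
                  · rw [Pi.mulSingle_eq_same, Pi.mulSingle_eq_same]
                  · rw [Pi.mulSingle_eq_of_ne hne,
                      Pi.mulSingle_eq_of_ne (fun h' => hne (Fin.succAbove_right_injective h'))]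
              rw [← hwe]
              exact hwH
            set u : Fin (nm + 1) → G := fun l => if l = j then 1 else h l with hu
            have husingle : ∀ l : Fin (nm + 1), Pi.mulSingle l (u l) ∈ H := by
              intro l
              by_cases hlj : l = j
              · subst hlj
                have : u l = 1 := by simp [hu]
                rw [this, Pi.mulSingle_one]
                exact one_mem H
              · obtain ⟨q, rfl⟩ := Fin.exists_succAbove_eq hlj
                have : u (j.succAbove q) = h (j.succAbove q) := by
                  simp [hu, Fin.succAbove_ne j q]
                rw [this]
                exact hw q
            have huH : u ∈ H := by
              rw [← Finset.noncommProd_mulSingle u]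
              exact Subgroup.noncommProd_mem _ _ fun l _ => husingle l
            have hhu : h = u := by
              have h2 : h * u⁻¹ ∈ H := mul_mem hh (inv_mem huH)
              have h3 : h * u⁻¹ = 1 := by
                apply Dtriv _ h2
                intro l hl
                show h l * (u l)⁻¹ = 1
                have : u l = h l := by simp [hu, hl]
                rw [this, mul_inv_cancel]
              rw [mul_inv_eq_one] at h3
              exact h3
            rw [hhu]
            simp [hu]
          -- solvability contradiction
          set pj : H →* G := (Pi.evalMonoidHom (fun _ : Fin (nm + 1) => G) j).comp H.subtype
            with hpj
          set Theta : H →* (Fin nm → G ⧸ S) :=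
            { toFun := fun h q => QuotientGroup.mk ((h : Fin (nm + 1) → G) (j.succAbove q))
              map_one' := rfl
              map_mul' := fun _ _ => rfl } with hTheta
          have hker : Theta.ker ≤ pj.ker := by
            intro x hx
            have hxS : ∀ l, l ≠ j → (x : Fin (nm + 1) → G) l ∈ S := by
              intro l hl
              obtain ⟨q, rfl⟩ := Fin.exists_succAbove_eq hl
              have hq := congrFun (MonoidHom.mem_ker.mp hx) q
              exact (QuotientGroup.eq_one_iff _).mp hq
            exact MonoidHom.mem_ker.mpr (Rtriv x x.2 hxS)
          haveI hsolv1 : Group.IsSolvable (Fin nm → G ⧸ S) := pi_isSolvable _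
          haveI hsolv2 : Group.IsSolvable Theta.range := inferInstance
          haveI hsolv3 : Group.IsSolvable (H ⧸ Theta.ker) :=
            solvable_of_mulEquiv (QuotientGroup.quotientKerEquivRange Theta).symm
          haveI hsolv4 : Group.IsSolvable (H ⧸ pj.ker) := by
            have hsurj : Function.Surjective
                (QuotientGroup.map Theta.ker pj.ker (MonoidHom.id _) (by simpa using hker)) := by
              intro y
              obtain ⟨x, rfl⟩ := QuotientGroup.mk_surjective y
              exact ⟨QuotientGroup.mk x, rfl⟩
            exact solvable_of_surjective hsurj
          haveI hsolv5 : Group.IsSolvable pj.range :=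
            solvable_of_mulEquiv (QuotientGroup.quotientKerEquivRange pj)
          have hSrange : S ≤ pj.range := by
            have hr : pj.range = Subgroup.map (Pi.evalMonoidHom (fun _ : Fin (nm + 1) => G) j) H := by
              rw [hpj, MonoidHom.range_comp, Subgroup.range_subtype]
            rw [hr]
            exact hSBj j
          haveI hsolvS : Group.IsSolvable S := by
            haveI : Group.IsSolvable (S.subgroupOf pj.range) := inferInstance
            exact solvable_of_mulEquiv (Subgroup.subgroupOfEquivOfLe hSrange)
          obtain ⟨x, y, hxy⟩ := hnonab
          haveI := hsimple
          exact hxy (IsSimpleGroup.comm_iff_isSolvable.mpr hsolvS x y)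
        · -- Case B: some C_t is nontrivial; build a forbidden isomorphism
          push_neg at hC
          obtain ⟨t, htj, hCt⟩ := hC
          set evj : (Fin (nm + 1) → G) →* G := Pi.evalMonoidHom (fun _ : Fin (nm + 1) => G) j
            with hevj
          set evt : (Fin (nm + 1) → G) →* G := Pi.evalMonoidHom (fun _ : Fin (nm + 1) => G) t
            with hevt
          have hconjC : ∀ b ∈ Subgroup.map evj H, ∀ x ∈ Subgroup.map evj (H ⊓ suppPair S t j),
              b * x * b⁻¹ ∈ Subgroup.map evj (H ⊓ suppPair S t j) := by
            rintro b ⟨f, hf, rfl⟩ x ⟨g, hg, rfl⟩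
            rw [SetLike.mem_coe, Subgroup.mem_inf] at hg
            rw [SetLike.mem_coe] at hf
            obtain ⟨hg21, hg22⟩ := mem_suppPair.mp hg.2
            refine ⟨f * g * f⁻¹, Subgroup.mem_inf.mpr ⟨mul_mem (mul_mem hf hg.1) (inv_mem hf),
              mem_suppPair.mpr ⟨fun l h1 h2 => ?_, ?_⟩⟩, rfl⟩
            · show f l * g l * (f l)⁻¹ = 1
              rw [hg21 l h1 h2]
              group
            · show f t * g t * (f t)⁻¹ ∈ S
              exact hN.conj_mem _ hg22 _
          rcases dichotomy S hsimple hcent _ _ (hSBj j) hconjC with hbotC | hSC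
          · exact hCt hbotC
          have Ktriv : ∀ h ∈ H, h t = 1 → h j = 1 := by
            have hconjK : ∀ b ∈ Subgroup.map evj H, ∀ x ∈ Subgroup.map evj (H ⊓ evt.ker),
                b * x * b⁻¹ ∈ Subgroup.map evj (H ⊓ evt.ker) := by
              rintro b ⟨f, hf, rfl⟩ x ⟨g, hg, rfl⟩
              rw [SetLike.mem_coe, Subgroup.mem_inf] at hg
              rw [SetLike.mem_coe] at hf
              have hgt : g t = 1 := MonoidHom.mem_ker.mp hg.2
              refine ⟨f * g * f⁻¹, Subgroup.mem_inf.mpr ⟨mul_mem (mul_mem hf hg.1) (inv_mem hf),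
                MonoidHom.mem_ker.mpr ?_⟩, rfl⟩
              show f t * g t * (f t)⁻¹ = 1
              rw [hgt]
              group
            rcases dichotomy S hsimple hcent _ _ (hSBj j) hconjK with hbotK | hSK
            · intro h hh ht
              have hmem : h j ∈ (⊥ : Subgroup G) := by
                rw [← hbotK]
                exact ⟨h, Subgroup.mem_inf.mpr ⟨hh, MonoidHom.mem_ker.mpr ht⟩, rfl⟩
              rwa [Subgroup.mem_bot] at hmem
            · exfalso
              obtain ⟨x, y, hxy⟩ := hnonab
              apply hxy
              obtain ⟨f, hf, hfj⟩ := hSC x.2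
              rw [SetLike.mem_coe, Subgroup.mem_inf] at hf
              obtain ⟨g, hg, hgj⟩ := hSK y.2
              rw [SetLike.mem_coe, Subgroup.mem_inf] at hg
              have hcommut : f * g * f⁻¹ * g⁻¹ = 1 := by
                apply Dtriv _
                  (mul_mem (mul_mem (mul_mem hf.1 hg.1) (inv_mem hf.1)) (inv_mem hg.1))
                intro l hl
                show f l * g l * (f l)⁻¹ * (g l)⁻¹ = 1
                by_cases hlt : l = t
                · have hgt : g t = 1 := MonoidHom.mem_ker.mp hg.2
                  rw [hlt, hgt]
                  group
                · rw [(mem_suppPair.mp hf.2).1 l hlt hl]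
                  group
              have hcj : f j * g j * (f j)⁻¹ * (g j)⁻¹ = 1 := congrFun hcommut j
              have hfj' : f j = (x : G) := hfj
              have hgj' : g j = (y : G) := hgj
              rw [hfj', hgj', mul_inv_eq_one, mul_inv_eq_iff_eq_mul] at hcj
              apply Subtype.ext
              push_cast
              exact hcj
          have K'triv : ∀ h ∈ H, h j = 1 → h t = 1 := by
            have hconjK' : ∀ b ∈ Subgroup.map evt H, ∀ x ∈ Subgroup.map evt (H ⊓ evj.ker),
                b * x * b⁻¹ ∈ Subgroup.map evt (H ⊓ evj.ker) := by
              rintro b ⟨f, hf, rfl⟩ x ⟨g, hg, rfl⟩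
              rw [SetLike.mem_coe, Subgroup.mem_inf] at hg
              rw [SetLike.mem_coe] at hf
              have hgj : g j = 1 := MonoidHom.mem_ker.mp hg.2
              refine ⟨f * g * f⁻¹, Subgroup.mem_inf.mpr ⟨mul_mem (mul_mem hf hg.1) (inv_mem hf),
                MonoidHom.mem_ker.mpr ?_⟩, rfl⟩
              show f j * g j * (f j)⁻¹ = 1
              rw [hgj]
              group
            rcases dichotomy S hsimple hcent _ _ (hSBj t) hconjK' with hbotK' | hSK'
            · intro h hh hj
              have hmem : h t ∈ (⊥ : Subgroup G) := by
                rw [← hbotK']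
                exact ⟨h, Subgroup.mem_inf.mpr ⟨hh, MonoidHom.mem_ker.mpr hj⟩, rfl⟩
              rwa [Subgroup.mem_bot] at hmem
            · exfalso
              have hex : ∃ v, v ∈ Subgroup.map evj (H ⊓ suppPair S t j) ∧ v ≠ 1 := by
                by_contra hno
                push_neg at hno
                apply hCt
                rw [eq_bot_iff]
                intro v hv
                rw [Subgroup.mem_bot]
                exact hno v hv
              obtain ⟨v, hv, hv1⟩ := hex
              obtain ⟨f, hf, hfj⟩ := hv
              rw [SetLike.mem_coe, Subgroup.mem_inf] at hf
              have hft : f t ∈ S := (mem_suppPair.mp hf.2).2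
              obtain ⟨g, hg, hgt⟩ := hSK' hft
              rw [SetLike.mem_coe, Subgroup.mem_inf] at hg
              have hgt' : g t = f t := hgt
              have h1 : (f * g⁻¹) t = 1 := by
                show f t * (g t)⁻¹ = 1
                rw [hgt', mul_inv_cancel]
              have h2 : f j * (g j)⁻¹ = 1 :=
                Ktriv _ (mul_mem hf.1 (inv_mem hg.1)) h1
              have hgj : g j = 1 := MonoidHom.mem_ker.mp hg.2
              have h3 : f j = 1 := by
                rwa [hgj, inv_one, mul_one] at h2
              apply hv1
              rw [← hfj]
              exact h3
          -- build the isomorphism α : B_t ≃* B_j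
          set pt : H →* G := evt.comp H.subtype with hpt
          set pj2 : H →* G := evj.comp H.subtype with hpj2
          have hkerEq : pt.ker = pj2.ker := by
            ext x
            simp only [MonoidHom.mem_ker]
            constructor
            · intro hx
              exact Ktriv x x.2 hx
            · intro hx
              exact K'triv x x.2 hx
          have hrt : pt.range = Subgroup.closure (Set.range fun i => a i t) := by
            rw [hpt, MonoidHom.range_comp, Subgroup.range_subtype, hBj t]
          have hrj : pj2.range = Subgroup.closure (Set.range fun i => a i j) := by
            rw [hpj2, MonoidHom.range_comp, Subgroup.range_subtype, hBj j]
          set alpha : (Subgroup.closure (Set.range fun i => a i t)) ≃*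
              (Subgroup.closure (Set.range fun i => a i j)) :=
            (((MulEquiv.subgroupCongr hrt.symm).trans
              (QuotientGroup.quotientKerEquivRange pt).symm).trans
              (QuotientGroup.quotientMulEquivOfEq hkerEq)).trans
              ((QuotientGroup.quotientKerEquivRange pj2).trans
                (MulEquiv.subgroupCongr hrj)) with halpha
          have haspec : ∀ (h : H) (hm : (h : Fin (nm + 1) → G) t ∈
              Subgroup.closure (Set.range fun i => a i t)),
              (alpha ⟨(h : Fin (nm + 1) → G) t, hm⟩ : G) = (h : Fin (nm + 1) → G) j := by
            intro h hm
            have e1 : (MulEquiv.subgroupCongr hrt.symm)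
                ⟨(h : Fin (nm + 1) → G) t, hm⟩ = ⟨pt h, ⟨h, rfl⟩⟩ := by
              apply Subtype.ext
              rw [MulEquiv.subgroupCongr_apply]
              rfl
            have e2 : (QuotientGroup.quotientKerEquivRange pt).symm ⟨pt h, ⟨h, rfl⟩⟩
                = QuotientGroup.mk h := by
              rw [MulEquiv.symm_apply_eq]
              rfl
            rw [halpha]
            simp only [MulEquiv.trans_apply]
            rw [e1, e2, QuotientGroup.quotientMulEquivOfEq_mk]
            rw [MulEquiv.subgroupCongr_apply]
            rfl
          have haA : ∀ i : Fin k, a i ∈ H := fun i =>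
            Subgroup.subset_closure (Set.mem_range_self i)
          have hspec : ∀ i : Fin k,
              (alpha ⟨a i t, Subgroup.subset_closure (Set.mem_range_self i)⟩ : G) = a i j := by
            intro i
            exact haspec ⟨a i, haA i⟩ _
          rcases lt_trichotomy t j with hlt | heq | hgt
          · exact hindep t j hlt ⟨alpha, hspec⟩
          · exact htj heq
          · refine hindep j t hgt ⟨alpha.symm, ?_⟩
            intro i
            have h1 : alpha ⟨a i t, Subgroup.subset_closure (Set.mem_range_self i)⟩
                = ⟨a i j, Subgroup.subset_closure (Set.mem_range_self i)⟩ :=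
              Subtype.ext (hspec i)
            rw [← h1, MulEquiv.symm_apply_apply]
      · exact hle
    -- assemble
    intro f hf
    have hdec := Finset.noncommProd_mulSingle f
    rw [← hdec]
    exact Subgroup.noncommProd_mem _ _ fun l _ =>
      key l (f l) ((Subgroup.mem_pi _).mp hf l (Set.mem_univ l))

end AbertAux

/-- Lemma 2, adapted from Abért: Let `G` be finite with `S ⊴ G` nonabelian
simple, `C_G(S) = 1` and `G/S` solvable. Given tuples `(a 1 j, ..., a k j)` each
generating a subgroup `B_j ≥ S`, pairwise automorphism independent, the subgroup of `G^n`
generated by the elements `h_i = (a i 1, ..., a i n)` contains `M = S × ... × S`. -/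
theorem subdirect_product_contains_socle_power (G : Type) [Group G] [Fintype G]
    (S : Subgroup G) [hN : S.Normal]
    (hsimple : IsSimpleGroup S)
    (hnonab : ∃ x y : S, x * y ≠ y * x)
    (hcent : Subgroup.centralizer (S : Set G) = ⊥)
    (hsolv : IsSolvable (G ⧸ S))
    (k n : ℕ) (hk : 1 ≤ k) (hn : 1 ≤ n)
    (a : Fin k → Fin n → G)
    (hB : ∀ j : Fin n, S ≤ Subgroup.closure (Set.range fun i => a i j))
    (hindep : ∀ j l : Fin n, j < l →
      ¬ ∃ α : (Subgroup.closure (Set.range fun i => a i j)) ≃*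
              (Subgroup.closure (Set.range fun i => a i l)),
        ∀ i : Fin k,
          (α ⟨a i j, Subgroup.subset_closure (Set.mem_range_self i)⟩ : G) = a i l) :
    Subgroup.pi Set.univ (fun _ => S) ≤ Subgroup.closure (Set.range a) := by
  exact AbertAux.abert_aux S hsimple hnonab hcent hsolv n k a hB hindep
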